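/- Let $S$ be a measurable space, let $\kappa$ and $\eta$ be Markov kernels from $S$ to $S$ such that the total variation distance between $\kappa(s)$ and $\eta(s)$ is at most $d$ for every $s \in S$, and let $\mu_0$ be a probability measure on $S$. Then for every $t \in \mathbb{N}$, the total variation distance between the $t$-step distributions $\mu_0 \kappa^{t}$ and $\mu_0 \eta^{t}$ (obtained by composing $\mu_0$ with $t$ iterates of the respective kernel) is at most $t \cdot d$; equivalently, $\|\mu_0 \kappa^{t} - \mu_0 \eta^{t}\|_1 \le 2 t d$. -/

import Mathlib

open MeasureTheory
open scoped ENNReal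

/-- Total variation distance between two measures, as the supremum over measurable sets of the
difference of the measures. -/
noncomputable def tvDist {S : Type*} [MeasurableSpace S] (μ ν : Measure S) : ℝ :=
  ⨆ E : {E : Set S // MeasurableSet E}, |(μ E).toReal - (ν E).toReal|

/-- The `t`-step state distribution obtained by composing an initial distribution `μ0` with `t`
iterates of the Markov kernel `κ`. -/
noncomputable def stepDist {S : Type*} [MeasurableSpace S]
    (κ : ProbabilityTheory.Kernel S S) (μ0 : Measure S) : ℕ → Measure S
  | 0 => μ0
  | (t + 1) => (stepDist κ μ0 t).bind κ

section Aux

variable {S : Type*} [MeasurableSpace S]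

lemma tvDist_bdd (μ ν : Measure S) [IsProbabilityMeasure μ] [IsProbabilityMeasure ν] :
    BddAbove (Set.range fun E : {E : Set S // MeasurableSet E} =>
      |(μ E).toReal - (ν E).toReal|) := by
  refine ⟨1, ?_⟩
  rintro x ⟨E, rfl⟩
  have h1 : (μ (E : Set S)).toReal ≤ 1 := by
    have := prob_le_one (μ := μ) (s := (E : Set S))
    simpa using ENNReal.toReal_mono ENNReal.one_ne_top this
  have h2 : (ν (E : Set S)).toReal ≤ 1 := by
    have := prob_le_one (μ := ν) (s := (E : Set S))
    simpa using ENNReal.toReal_mono ENNReal.one_ne_top this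
  have h3 : 0 ≤ (μ (E : Set S)).toReal := ENNReal.toReal_nonneg
  have h4 : 0 ≤ (ν (E : Set S)).toReal := ENNReal.toReal_nonneg
  rw [abs_sub_le_iff]; constructor <;> linarith

lemma le_tvDist (μ ν : Measure S) [IsProbabilityMeasure μ] [IsProbabilityMeasure ν]
    {E : Set S} (hE : MeasurableSet E) :
    |(μ E).toReal - (ν E).toReal| ≤ tvDist μ ν :=
  le_ciSup (tvDist_bdd μ ν) ⟨E, hE⟩

lemma tvDist_nonneg (μ ν : Measure S) [IsProbabilityMeasure μ] [IsProbabilityMeasure ν] :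
    0 ≤ tvDist μ ν :=
  le_trans (abs_nonneg _) (le_tvDist μ ν MeasurableSet.univ)

lemma tvDist_comm (μ ν : Measure S) : tvDist μ ν = tvDist ν μ := by
  simp [tvDist, abs_sub_comm]

lemma tvDist_self (μ : Measure S) : tvDist μ μ = 0 := by
  simp [tvDist]

lemma lintegral_le_lintegral_add_tv (μ ν : Measure S)
    [IsProbabilityMeasure μ] [IsProbabilityMeasure ν]
    {f : S → ℝ≥0∞} (hf : Measurable f) (hf1 : ∀ s, f s ≤ 1) :
    ∫⁻ s, f s ∂μ ≤ ∫⁻ s, f s ∂ν + ENNReal.ofReal (tvDist μ ν) := by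
  obtain ⟨A, hA, h1, h2⟩ := hahn_decomposition (μ := μ) (ν := ν)
  have hres : ν.restrict A ≤ μ.restrict A := by
    refine Measure.le_iff.2 fun s hs => ?_
    rw [Measure.restrict_apply hs, Measure.restrict_apply hs]
    exact h1 _ (hs.inter hA) Set.inter_subset_right
  have hres2 : μ.restrict Aᶜ ≤ ν.restrict Aᶜ := by
    refine Measure.le_iff.2 fun s hs => ?_
    rw [Measure.restrict_apply hs, Measure.restrict_apply hs]
    exact h2 _ (hs.inter hA.compl) Set.inter_subset_right
  have hνA : ν A ≤ μ A := h1 A hA subset_rfl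
  have keyA : ∫⁻ s, f s ∂(μ.restrict A) ≤ ∫⁻ s, f s ∂(ν.restrict A) + (μ A - ν A) := by
    have hdec : μ.restrict A = (μ.restrict A - ν.restrict A) + ν.restrict A :=
      (Measure.sub_add_cancel_of_le hres).symm
    calc ∫⁻ s, f s ∂(μ.restrict A)
        = ∫⁻ s, f s ∂(μ.restrict A - ν.restrict A) + ∫⁻ s, f s ∂(ν.restrict A) := by
          conv_lhs => rw [hdec]
          exact lintegral_add_measure f _ _
      _ ≤ (μ.restrict A - ν.restrict A) Set.univ + ∫⁻ s, f s ∂(ν.restrict A) := by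
          gcongr
          calc ∫⁻ s, f s ∂(μ.restrict A - ν.restrict A)
              ≤ ∫⁻ _, 1 ∂(μ.restrict A - ν.restrict A) := lintegral_mono hf1
            _ = (μ.restrict A - ν.restrict A) Set.univ := by simp
      _ = ∫⁻ s, f s ∂(ν.restrict A) + (μ A - ν A) := by
          rw [Measure.sub_apply MeasurableSet.univ hres]
          simp [add_comm]
  have keyAc : ∫⁻ s, f s ∂(μ.restrict Aᶜ) ≤ ∫⁻ s, f s ∂(ν.restrict Aᶜ) :=
    lintegral_mono' hres2 le_rfl
  have hsub : μ A - ν A ≤ ENNReal.ofReal (tvDist μ ν) := by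
    rw [ENNReal.le_ofReal_iff_toReal_le (by finiteness) (tvDist_nonneg μ ν)]
    rw [ENNReal.toReal_sub_of_le hνA (measure_ne_top μ A)]
    exact le_trans (le_abs_self _) (le_tvDist μ ν hA)
  calc ∫⁻ s, f s ∂μ = ∫⁻ s, f s ∂(μ.restrict A) + ∫⁻ s, f s ∂(μ.restrict Aᶜ) :=
        (lintegral_add_compl f hA).symm
    _ ≤ (∫⁻ s, f s ∂(ν.restrict A) + (μ A - ν A)) + ∫⁻ s, f s ∂(ν.restrict Aᶜ) :=
        add_le_add keyA keyAc
    _ = (∫⁻ s, f s ∂(ν.restrict A) + ∫⁻ s, f s ∂(ν.restrict Aᶜ)) + (μ A - ν A) := by ring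
    _ = ∫⁻ s, f s ∂ν + (μ A - ν A) := by rw [lintegral_add_compl f hA]
    _ ≤ ∫⁻ s, f s ∂ν + ENNReal.ofReal (tvDist μ ν) := by gcongr

lemma bind_prob (μ : Measure S) [IsProbabilityMeasure μ] (κ : ProbabilityTheory.Kernel S S)
    [ProbabilityTheory.IsMarkovKernel κ] : IsProbabilityMeasure (μ.bind κ) := by
  constructor
  rw [Measure.bind_apply MeasurableSet.univ κ.measurable.aemeasurable]
  simp

lemma bind_toReal_le (μ ν : Measure S) [IsProbabilityMeasure μ] [IsProbabilityMeasure ν]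
    (κ η : ProbabilityTheory.Kernel S S)
    [ProbabilityTheory.IsMarkovKernel κ] [ProbabilityTheory.IsMarkovKernel η]
    (d : ℝ) (hd : 0 ≤ d) (htv : ∀ s, tvDist (κ s) (η s) ≤ d)
    {E : Set S} (hE : MeasurableSet E) :
    ((μ.bind κ) E).toReal ≤ ((ν.bind η) E).toReal + tvDist μ ν + d := by
  haveI := bind_prob ν η
  have hfmeas : Measurable fun s => κ s E := ProbabilityTheory.Kernel.measurable_coe κ hE
  have hf1 : ∀ s, κ s E ≤ 1 := fun s => prob_le_one
  have step1 : ∫⁻ s, κ s E ∂μ ≤ ∫⁻ s, κ s E ∂ν + ENNReal.ofReal (tvDist μ ν) :=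
    lintegral_le_lintegral_add_tv μ ν hfmeas hf1
  have hpt : ∀ s, κ s E ≤ η s E + ENNReal.ofReal d := by
    intro s
    have habs : |((κ s) E).toReal - ((η s) E).toReal| ≤ d :=
      le_trans (le_tvDist (κ s) (η s) hE) (htv s)
    have : ((κ s) E).toReal ≤ ((η s) E).toReal + d := by
      have := abs_sub_le_iff.1 habs
      linarith [this.1]
    calc κ s E = ENNReal.ofReal ((κ s E).toReal) := (ENNReal.ofReal_toReal (measure_ne_top _ _)).symm
      _ ≤ ENNReal.ofReal (((η s) E).toReal + d) := ENNReal.ofReal_le_ofReal this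
      _ = ENNReal.ofReal (((η s) E).toReal) + ENNReal.ofReal d :=
          ENNReal.ofReal_add ENNReal.toReal_nonneg hd
      _ = η s E + ENNReal.ofReal d := by rw [ENNReal.ofReal_toReal (measure_ne_top _ _)]
  have step2 : ∫⁻ s, κ s E ∂ν ≤ ∫⁻ s, η s E ∂ν + ENNReal.ofReal d := by
    calc ∫⁻ s, κ s E ∂ν ≤ ∫⁻ s, (η s E + ENNReal.ofReal d) ∂ν := lintegral_mono hpt
      _ = ∫⁻ s, η s E ∂ν + ENNReal.ofReal d := by
          rw [lintegral_add_right _ measurable_const, lintegral_const]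
          simp
  have total : (μ.bind κ) E ≤ (ν.bind η) E + ENNReal.ofReal (tvDist μ ν) + ENNReal.ofReal d := by
    rw [Measure.bind_apply hE κ.measurable.aemeasurable, Measure.bind_apply hE η.measurable.aemeasurable]
    calc ∫⁻ s, κ s E ∂μ ≤ ∫⁻ s, κ s E ∂ν + ENNReal.ofReal (tvDist μ ν) := step1
      _ ≤ (∫⁻ s, η s E ∂ν + ENNReal.ofReal d) + ENNReal.ofReal (tvDist μ ν) := by gcongr
      _ = ∫⁻ s, η s E ∂ν + ENNReal.ofReal (tvDist μ ν) + ENNReal.ofReal d := by ring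
  have := ENNReal.toReal_mono (by finiteness) total
  rwa [ENNReal.toReal_add (by finiteness) (by finiteness),
    ENNReal.toReal_add (by finiteness) (by finiteness),
    ENNReal.toReal_ofReal (tvDist_nonneg μ ν), ENNReal.toReal_ofReal hd] at this

lemma tvDist_bind_le (μ ν : Measure S) [IsProbabilityMeasure μ] [IsProbabilityMeasure ν]
    (κ η : ProbabilityTheory.Kernel S S)
    [ProbabilityTheory.IsMarkovKernel κ] [ProbabilityTheory.IsMarkovKernel η]
    (d : ℝ) (hd : 0 ≤ d) (htv : ∀ s, tvDist (κ s) (η s) ≤ d) :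
    tvDist (μ.bind κ) (ν.bind η) ≤ tvDist μ ν + d := by
  have htv' : ∀ s, tvDist (η s) (κ s) ≤ d := fun s => by rw [tvDist_comm]; exact htv s
  refine Real.iSup_le ?_ (by linarith [tvDist_nonneg μ ν])
  rintro ⟨E, hE⟩
  rw [abs_sub_le_iff]
  constructor
  · linarith [bind_toReal_le μ ν κ η d hd htv hE]
  · have := bind_toReal_le ν μ η κ d hd htv' hE
    rw [tvDist_comm ν μ] at this
    linarith

lemma stepDist_prob (κ : ProbabilityTheory.Kernel S S) [ProbabilityTheory.IsMarkovKernel κ]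
    (μ0 : Measure S) [IsProbabilityMeasure μ0] :
    ∀ t, IsProbabilityMeasure (stepDist κ μ0 t)
  | 0 => by simpa [stepDist] using inferInstanceAs (IsProbabilityMeasure μ0)
  | (t + 1) => by
      haveI := stepDist_prob κ μ0 t
      exact bind_prob _ κ

end Aux

/-- State-distribution shift bound: if two Markov kernels `κ, η` on `S` satisfy
`D_TV(κ(s), η(s)) ≤ d` for every `s`, then for every initial distribution `μ0` and every `t`,
`D_TV(μ0 κᵗ, μ0 ηᵗ) ≤ t d`; equivalently `‖μ0 κᵗ - μ0 ηᵗ‖₁ ≤ 2 t d`. -/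
theorem stmt_17 {S : Type*} [MeasurableSpace S]
    (κ η : ProbabilityTheory.Kernel S S)
    [ProbabilityTheory.IsMarkovKernel κ] [ProbabilityTheory.IsMarkovKernel η]
    (d : ℝ) (htv : ∀ s, tvDist (κ s) (η s) ≤ d)
    (μ0 : Measure S) [IsProbabilityMeasure μ0] (t : ℕ) :
    tvDist (stepDist κ μ0 t) (stepDist η μ0 t) ≤ t * d ∧
      2 * tvDist (stepDist κ μ0 t) (stepDist η μ0 t) ≤ 2 * t * d := by
  have hS : Nonempty S := by
    by_contra h
    have huniv : (Set.univ : Set S) = ∅ := Set.univ_eq_empty_iff.2 (not_nonempty_iff.1 h)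
    have : μ0 Set.univ = 1 := measure_univ
    rw [huniv] at this
    simp at this
  obtain ⟨s0⟩ := hS
  have hd : 0 ≤ d := le_trans (tvDist_nonneg (κ s0) (η s0)) (htv s0)
  have main : tvDist (stepDist κ μ0 t) (stepDist η μ0 t) ≤ t * d := by
    induction t with
    | zero => simp [stepDist, tvDist_self]
    | succ t ih =>
        haveI := stepDist_prob κ μ0 t
        haveI := stepDist_prob η μ0 t
        have := tvDist_bind_le (stepDist κ μ0 t) (stepDist η μ0 t) κ η d hd htv
        have : tvDist (stepDist κ μ0 (t + 1)) (stepDist η μ0 (t + 1)) ≤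
            tvDist (stepDist κ μ0 t) (stepDist η μ0 t) + d := this
        push_cast
        linarith
  exact ⟨main, by linarith⟩
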